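/- Let G be a finite simple graph with nonnegative edge weights x such that every odd simple cycle of G has total weight at least 1. Then every closed walk of odd length in G has total weight at least 1, where the weight of a walk is the sum of the weights of its edges counted with multiplicity. -/

import Mathlib

open SimpleGraph

/-- The weight of a walk: the sum of the weights of its edges, counted with multiplicity. -/
def walkWeight {V : Type*} {G : SimpleGraph V} (x : Sym2 V → ℝ) {u v : V}
    (p : G.Walk u v) : ℝ :=
  (p.edges.map x).sum

lemma walkWeight_nonneg {V : Type*} {G : SimpleGraph V} {x : Sym2 V → ℝ}
    (hx : ∀ e ∈ G.edgeSet, 0 ≤ x e) {u v : V} (p : G.Walk u v) :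
    0 ≤ walkWeight x p := by
  apply List.sum_nonneg
  intro a ha
  obtain ⟨e, he, rfl⟩ := List.mem_map.mp ha
  exact hx e (p.edges_subset_edgeSet he)

lemma not_mem_edges_of_path {V : Type*} {G : SimpleGraph V} {u v : V} (p : G.Walk u v)
    (hnd : p.support.Nodup) (hlen : 2 ≤ p.length) : s(v, u) ∉ p.edges := by
  cases p with
  | nil => simp at hlen
  | @cons _ w _ h' q =>
    intro hmem
    rw [SimpleGraph.Walk.edges_cons, List.mem_cons] at hmem
    rw [SimpleGraph.Walk.support_cons, List.nodup_cons] at hnd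
    rcases hmem with heq | hmem
    · rw [Sym2.eq_iff] at heq
      rcases heq with ⟨rfl, rfl⟩ | ⟨rfl, -⟩
      · exact hnd.1 q.end_mem_support
      · -- q : G.Walk v v with nodup support, so q = nil, contradicting length
        have : q.Nil := by
          cases q with
          | nil => exact SimpleGraph.Walk.nil_nil
          | cons h'' r =>
            exfalso
            rw [SimpleGraph.Walk.support_cons, List.nodup_cons] at hnd
            exact hnd.2.1 r.end_mem_support
        rw [SimpleGraph.Walk.length_cons, (SimpleGraph.Walk.nil_iff_length_eq.mp this)] at hlen
        omega
    · exact hnd.1 (q.snd_mem_support_of_mem_edges hmem)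

/-- If every odd simple cycle has total weight at least 1 (with nonnegative edge weights),
then every closed walk of odd length has total weight at least 1. -/
theorem stmt2 {V : Type*} [Fintype V] (G : SimpleGraph V) (x : Sym2 V → ℝ)
    (hx : ∀ e ∈ G.edgeSet, 0 ≤ x e)
    (hodd : ∀ (v : V) (C : G.Walk v v), C.IsCycle → Odd C.length → 1 ≤ walkWeight x C)
    (v : V) (W : G.Walk v v) (hW : Odd W.length) :
    1 ≤ walkWeight x W := by
  classical
  obtain ⟨n, hn⟩ : ∃ n, W.length = n := ⟨_, rfl⟩
  induction n using Nat.strong_induction_on generalizing v W with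
  | _ n ih =>
  subst hn
  by_cases hnd : W.support.tail.Nodup
  · -- W is a cycle
    cases W with
    | nil => simp at hW
    | @cons _ u _ h p =>
      rw [SimpleGraph.Walk.support_cons, List.tail_cons] at hnd
      have hlen : 2 ≤ p.length := by
        rcases hW with ⟨k, hk⟩
        rw [SimpleGraph.Walk.length_cons] at hk
        rcases Nat.eq_zero_or_pos k with rfl | hk'
        · exfalso
          have : p.length = 0 := by omega
          have := p.eq_of_length_eq_zero this
          subst this
          exact h.ne rfl
        · omega
      have hcyc : (SimpleGraph.Walk.cons h p).IsCycle := by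
        rw [SimpleGraph.Walk.cons_isCycle_iff]
        exact ⟨SimpleGraph.Walk.IsPath.mk' hnd, not_mem_edges_of_path p hnd hlen⟩
      exact hodd v _ hcyc hW
  · -- split at a repeated vertex
    obtain ⟨w, hdup⟩ := List.exists_duplicate_iff_not_nodup.mpr hnd
    have hcount : 2 ≤ W.support.tail.count w := List.duplicate_iff_two_le_count.mp hdup
    have hw : w ∈ W.support := by
      rw [W.support_eq_cons]
      exact List.mem_cons_of_mem _ hdup.mem
    set W' := W.rotate w hw with hW'
    have hperm : List.Perm W'.edges W.edges := (W.rotate_edges w hw).perm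
    have hlen' : W'.length = W.length := by
      rw [← SimpleGraph.Walk.length_edges, ← SimpleGraph.Walk.length_edges]
      exact hperm.length_eq
    have hweq : walkWeight x W' = walkWeight x W := (hperm.map x).sum_eq
    have hcount' : 2 ≤ W'.support.tail.count w :=
      ((W.support_rotate w hw).perm.count_eq w) ▸ hcount
    cases hW'' : W' with
    | nil =>
      rw [hW''] at hcount'; simp at hcount'
    | @cons _ u _ h q =>
      rw [hW'', SimpleGraph.Walk.support_cons, List.tail_cons] at hcount'
      have hwq : w ∈ q.support := by
        by_contra hc
        rw [List.count_eq_zero_of_not_mem hc] at hcount'; omega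
      have hspec := q.take_spec hwq
      set T := q.takeUntil w hwq with hT
      set D := q.dropUntil w hwq with hD
      have hcountT : T.support.count w = 1 := q.count_support_takeUntil_eq_one hwq
      have hcountD : 1 ≤ D.support.tail.count w := by
        have : q.support = T.support ++ D.support.tail := by
          rw [← hspec]; exact (SimpleGraph.Walk.support_append T D)
        rw [this, List.count_append, hcountT] at hcount'
        omega
      have hDlen : 1 ≤ D.length := by
        by_contra hc
        have h0 : D.support.tail.length = 0 := by
          rw [List.length_tail, D.length_support]; omega
        rw [List.length_eq_zero_iff.mp h0] at hcountD
        simp at hcountD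
      -- W' = (cons h T).append D
      have hsplit : W' = (SimpleGraph.Walk.cons h T).append D := by
        rw [hW'', ← hspec]; rfl
      have hwsum : walkWeight x W' =
          walkWeight x (SimpleGraph.Walk.cons h T) + walkWeight x D := by
        rw [hsplit]
        simp [walkWeight, SimpleGraph.Walk.edges_append]
        ring
      have hlsum : W'.length = (SimpleGraph.Walk.cons h T).length + D.length := by
        rw [hsplit, SimpleGraph.Walk.length_append]
      have hA : 1 ≤ (SimpleGraph.Walk.cons h T).length := by
        rw [SimpleGraph.Walk.length_cons]; omega
      have hoddWn : Odd W'.length := hlen' ▸ hW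
      rw [← hweq, hwsum]
      have hparity : Odd (SimpleGraph.Walk.cons h T).length ∨ Odd D.length := by
        rw [Nat.odd_iff] at hoddWn ⊢
        rw [Nat.odd_iff]
        omega
      have hWlen := hlen'
      rcases hparity with hcase | hcase
      · have h1 : 1 ≤ walkWeight x (SimpleGraph.Walk.cons h T) := by
          exact ih (SimpleGraph.Walk.cons h T).length (by omega) w _ hcase rfl
        have h2 : 0 ≤ walkWeight x D := walkWeight_nonneg hx D
        linarith
      · have h1 : 1 ≤ walkWeight x D :=
          ih D.length (by omega) w _ hcase rfl
        have h2 : 0 ≤ walkWeight x (SimpleGraph.Walk.cons h T) := walkWeight_nonneg hx _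
        linarith
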